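/- Let N ≥ 2 be an integer and let A = (a_{jk}) and B = (b_{jk}) be positive semidefinite N×N complex matrices (indices running from 0 to N−1). Then det(A ⋄ B) ≥ b_{00}^N · det A + a_{00}^N · det B, where ⋄ denotes the Jury product. -/

import Mathlib

open Finset ComplexOrder

/-- The Jury product of two `N × N` complex matrices (indices `0, …, N-1`):
`(A ⋄ B)_{jk} = ∑_{m=0}^{j} ∑_{n=0}^{k} a_{m,n} b_{j-m,k-n}`.
(For `m ≤ j` the `Fin`-subtraction `j - m` agrees with natural subtraction.) -/
noncomputable def jury {N : ℕ} (A B : Matrix (Fin N) (Fin N) ℂ) :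
    Matrix (Fin N) (Fin N) ℂ :=
  Matrix.of fun j k => ∑ m ∈ Finset.Iic j, ∑ n ∈ Finset.Iic k, A m n * B (j - m) (k - n)

open Matrix

/-! ### Auxiliary lemmas on `Fin` subtraction and sums over `Iic` -/

lemma fin_sub_val {ν : ℕ} {j p : Fin ν} (h : p ≤ j) : (j - p).1 = j.1 - p.1 := by
  rw [Fin.sub_def]
  have hj := j.2
  have h' : (p : ℕ) ≤ j := h
  have : (ν - p.1 + j.1) = ν + (j.1 - p.1) := by omega
  simp only [this]
  rw [Nat.add_mod_left, Nat.mod_eq_of_lt (by omega)]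

lemma fin_sub_le {ν : ℕ} {j p : Fin ν} (h : p ≤ j) : j - p ≤ j := by
  rw [Fin.le_def, fin_sub_val h]; omega

lemma fin_sub_sub {ν : ℕ} {j p : Fin ν} (h : p ≤ j) : j - (j - p) = p := by
  have h2 : j - p ≤ j := fin_sub_le h
  apply Fin.ext
  rw [fin_sub_val h2, fin_sub_val h]
  have : (p:ℕ) ≤ j := h
  omega

lemma fin_succ_sub_castSucc {ν : ℕ} {j p : Fin ν} (h : p ≤ j) :
    j.succ - p.castSucc = (j - p).succ := by
  apply Fin.ext
  have h1 : p.castSucc ≤ j.succ := by rw [Fin.le_def]; simp; omega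
  rw [fin_sub_val h1, Fin.val_succ, Fin.val_succ, fin_sub_val h, Fin.coe_castSucc]
  have : (p:ℕ) ≤ j := h
  omega

lemma fin_succ_sub_succ {ν : ℕ} {j p : Fin ν} (h : p ≤ j) :
    j.succ - p.succ = (j - p).castSucc := by
  apply Fin.ext
  have h1 : p.succ ≤ j.succ := by rw [Fin.le_def]; simp; omega
  rw [fin_sub_val h1, Fin.coe_castSucc, fin_sub_val h, Fin.val_succ, Fin.val_succ]
  omega

lemma Iic_succ_eq {ν : ℕ} (j : Fin ν) :
    Iic j.succ = insert j.succ ((Iic j).map Fin.castSuccEmb) := by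
  ext m
  simp only [mem_Iic, mem_insert, mem_map, Fin.castSuccEmb, Function.Embedding.coeFn_mk]
  constructor
  · intro h
    rcases eq_or_lt_of_le h with h1 | h2
    · exact Or.inl h1
    · refine Or.inr ⟨⟨m.1, by have := j.2; rw [Fin.lt_def] at h2; simp at h2; omega⟩,
        by rw [Fin.le_def]; rw [Fin.lt_def] at h2; simpa using by simp at h2; omega, by ext; simp⟩
  · rintro (rfl | ⟨p, hp, rfl⟩)
    · exact le_refl _
    · rw [Fin.le_def] at hp ⊢
      simp at hp ⊢
      omega

lemma succ_not_mem_map {ν : ℕ} (j : Fin ν) : j.succ ∉ (Iic j).map Fin.castSuccEmb := by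
  simp only [mem_map, Fin.castSuccEmb, Function.Embedding.coeFn_mk, not_exists, not_and]
  intro p hp h
  rw [mem_Iic, Fin.le_def] at hp
  have h1 : (p.castSucc : ℕ) = (j.succ : ℕ) := congrArg Fin.val h
  rw [Fin.coe_castSucc, Fin.val_succ] at h1
  omega

lemma sum_Iic_succ_castSucc {ν : ℕ} (j : Fin ν) (f : Fin (ν+1) → ℂ) (hf : f j.succ = 0) :
    ∑ i ∈ Iic j.succ, f i = ∑ p ∈ Iic j, f p.castSucc := by
  rw [Iic_succ_eq, Finset.sum_insert (succ_not_mem_map j), hf, zero_add, Finset.sum_map]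
  rfl

lemma Iic_succ_eq' {ν : ℕ} (j : Fin ν) :
    Iic j.succ = insert 0 ((Iic j).map ⟨Fin.succ, Fin.succ_injective _⟩) := by
  ext m
  simp only [mem_Iic, mem_insert, mem_map, Function.Embedding.coeFn_mk]
  constructor
  · intro h
    rcases Nat.eq_zero_or_pos m.1 with h1 | h2
    · exact Or.inl (by ext; simpa using h1)
    · refine Or.inr ⟨⟨m.1 - 1, by have := m.2; omega⟩, ?_, ?_⟩
      · rw [Fin.le_def] at h ⊢; simp at h ⊢; omega
      · ext; simp; omega
  · rintro (rfl | ⟨p, hp, rfl⟩)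
    · exact Fin.zero_le _
    · rw [Fin.le_def] at hp ⊢
      simp at hp ⊢
      omega

lemma sum_Iic_succ_succ {ν : ℕ} (j : Fin ν) (f : Fin (ν+1) → ℂ) (hf : f 0 = 0) :
    ∑ i ∈ Iic j.succ, f i = ∑ p ∈ Iic j, f p.succ := by
  rw [Iic_succ_eq', Finset.sum_insert (by simp [Fin.succ_ne_zero]), hf, zero_add, Finset.sum_map]
  rfl

lemma sum_Iic_rev {ν : ℕ} (j : Fin ν) (f : Fin ν → ℂ) :
    ∑ p ∈ Iic j, f p = ∑ p ∈ Iic j, f (j - p) := by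
  apply Finset.sum_nbij' (fun p => j - p) (fun p => j - p)
  · intro a ha; simp only [mem_Iic] at *; exact fin_sub_le ha
  · intro a ha; simp only [mem_Iic] at *; exact fin_sub_le ha
  · intro a ha; simp only [mem_Iic] at ha; exact fin_sub_sub ha
  · intro a ha; simp only [mem_Iic] at ha; exact fin_sub_sub ha
  · intro a ha
    simp only [mem_Iic] at ha
    rw [fin_sub_sub ha]

/-! ### Basic properties of the Jury product -/

lemma jury_apply {N : ℕ} (A B : Matrix (Fin N) (Fin N) ℂ) (j k : Fin N) :
    jury A B j k = ∑ m ∈ Finset.Iic j, ∑ n ∈ Finset.Iic k, A m n * B (j - m) (k - n) := rfl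

lemma jury_add_left {N : ℕ} (A₁ A₂ B : Matrix (Fin N) (Fin N) ℂ) :
    jury (A₁ + A₂) B = jury A₁ B + jury A₂ B := by
  ext j k
  simp [jury_apply, add_mul, Finset.sum_add_distrib]

lemma jury_add_right {N : ℕ} (A B₁ B₂ : Matrix (Fin N) (Fin N) ℂ) :
    jury A (B₁ + B₂) = jury A B₁ + jury A B₂ := by
  ext j k
  simp [jury_apply, mul_add, Finset.sum_add_distrib]

lemma jury_rankOne {N : ℕ} (x y : Fin N → ℂ) :
    jury (Matrix.of fun j k => x j * star (x k)) (Matrix.of fun j k => y j * star (y k)) =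
      Matrix.of fun j k => (∑ m ∈ Iic j, x m * y (j - m)) * star (∑ n ∈ Iic k, x n * y (k - n)) := by
  ext j k
  simp only [jury_apply, of_apply, star_sum, Finset.sum_mul_sum]
  apply Finset.sum_congr rfl
  intro m _
  apply Finset.sum_congr rfl
  intro n _
  simp only [star_mul']
  ring

lemma Iic_zero_fin {ν : ℕ} : Iic (0 : Fin (ν+1)) = {0} := by
  ext m; simp [Fin.le_zero_iff]

lemma jury_row_zero_left {ν : ℕ} (A B : Matrix (Fin (ν+1)) (Fin (ν+1)) ℂ)
    (h : ∀ k, A 0 k = 0) (k : Fin (ν+1)) : jury A B 0 k = 0 := by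
  simp [jury_apply, Iic_zero_fin, h]

lemma jury_col_zero_left {ν : ℕ} (A B : Matrix (Fin (ν+1)) (Fin (ν+1)) ℂ)
    (h : ∀ j, A j 0 = 0) (j : Fin (ν+1)) : jury A B j 0 = 0 := by
  simp [jury_apply, Iic_zero_fin, h]

lemma jury_row_zero_right {ν : ℕ} (A B : Matrix (Fin (ν+1)) (Fin (ν+1)) ℂ)
    (h : ∀ k, B 0 k = 0) (k : Fin (ν+1)) : jury A B 0 k = 0 := by
  simp [jury_apply, Iic_zero_fin, h]

lemma jury_col_zero_right {ν : ℕ} (A B : Matrix (Fin (ν+1)) (Fin (ν+1)) ℂ)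
    (h : ∀ j, B j 0 = 0) (j : Fin (ν+1)) : jury A B j 0 = 0 := by
  simp [jury_apply, Iic_zero_fin, h]

lemma quad_swap {α β γ δ : Type*} (s : Finset α) (t : Finset β) (u : Finset γ) (v : Finset δ)
    (f : α → β → γ → δ → ℂ) :
    ∑ m ∈ s, ∑ n ∈ t, ∑ p ∈ u, ∑ q ∈ v, f m n p q
      = ∑ p ∈ u, ∑ q ∈ v, ∑ m ∈ s, ∑ n ∈ t, f m n p q := by
  have h1 : ∑ m ∈ s, ∑ n ∈ t, ∑ p ∈ u, ∑ q ∈ v, f m n p q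
      = ∑ m ∈ s, ∑ p ∈ u, ∑ n ∈ t, ∑ q ∈ v, f m n p q :=
    Finset.sum_congr rfl fun m _ => Finset.sum_comm
  have h2 : ∑ m ∈ s, ∑ p ∈ u, ∑ n ∈ t, ∑ q ∈ v, f m n p q
      = ∑ p ∈ u, ∑ m ∈ s, ∑ n ∈ t, ∑ q ∈ v, f m n p q := Finset.sum_comm
  have h3 : ∑ p ∈ u, ∑ m ∈ s, ∑ n ∈ t, ∑ q ∈ v, f m n p q
      = ∑ p ∈ u, ∑ m ∈ s, ∑ q ∈ v, ∑ n ∈ t, f m n p q :=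
    Finset.sum_congr rfl fun p _ => Finset.sum_congr rfl fun m _ => Finset.sum_comm
  have h4 : ∑ p ∈ u, ∑ m ∈ s, ∑ q ∈ v, ∑ n ∈ t, f m n p q
      = ∑ p ∈ u, ∑ q ∈ v, ∑ m ∈ s, ∑ n ∈ t, f m n p q :=
    Finset.sum_congr rfl fun p _ => Finset.sum_comm
  rw [h1, h2, h3, h4]

open scoped MatrixOrder in
lemma posSemidef_iff_eq_transpose_mul_self {N : ℕ} {A : Matrix (Fin N) (Fin N) ℂ} :
    A.PosSemidef ↔ ∃ B : Matrix (Fin N) (Fin N) ℂ, A = Bᴴ * B := by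
  constructor
  · intro hA
    exact CStarAlgebra.nonneg_iff_eq_star_mul_self.mp hA.nonneg
  · rintro ⟨B, rfl⟩
    exact posSemidef_conjTranspose_mul_self B

lemma jury_posSemidef {N : ℕ} {A B : Matrix (Fin N) (Fin N) ℂ}
    (hA : A.PosSemidef) (hB : B.PosSemidef) : (jury A B).PosSemidef := by
  obtain ⟨R, hR⟩ := posSemidef_iff_eq_transpose_mul_self.mp hA
  obtain ⟨S, hS⟩ := posSemidef_iff_eq_transpose_mul_self.mp hB
  have key : jury A B =
      (Matrix.of fun (pq : Fin N × Fin N) j => ∑ m ∈ Iic j, R pq.1 m * S pq.2 (j - m))ᴴ *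
      (Matrix.of fun (pq : Fin N × Fin N) j => ∑ m ∈ Iic j, R pq.1 m * S pq.2 (j - m)) := by
    ext j k
    rw [mul_apply, Fintype.sum_prod_type, jury_apply]
    have lhs_eq : ∑ m ∈ Iic j, ∑ n ∈ Iic k, A m n * B (j - m) (k - n)
        = ∑ m ∈ Iic j, ∑ n ∈ Iic k, ∑ p : Fin N, ∑ q : Fin N,
            (star (R p m) * R p n) * (star (S q (j - m)) * S q (k - n)) := by
      apply Finset.sum_congr rfl; intro m _
      apply Finset.sum_congr rfl; intro n _
      rw [hR, hS, mul_apply, mul_apply]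
      simp only [conjTranspose_apply]
      rw [Finset.sum_mul_sum]
    rw [lhs_eq, quad_swap]
    apply Finset.sum_congr rfl; intro p _
    apply Finset.sum_congr rfl; intro q _
    simp only [conjTranspose_apply, of_apply, star_sum, Finset.sum_mul_sum]
    apply Finset.sum_congr rfl; intro m _
    apply Finset.sum_congr rfl; intro n _
    simp only [star_mul']
    ring
  rw [key]
  exact posSemidef_conjTranspose_mul_self _

/-! ### Determinant superadditivity for positive semidefinite matrices -/

lemma one_add_prod_le_prod_one_add {ι : Type*} (s : Finset ι) (hs : s.Nonempty) (f : ι → ℝ)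
    (hf : ∀ i ∈ s, 0 ≤ f i) : 1 + ∏ i ∈ s, f i ≤ ∏ i ∈ s, (1 + f i) := by
  induction hs using Finset.Nonempty.cons_induction with
  | singleton a => simp
  | cons a s ha hs ih =>
    rw [Finset.prod_cons, Finset.prod_cons]
    have hfa : 0 ≤ f a := hf a (Finset.mem_cons_self a s)
    have hrest : ∀ i ∈ s, 0 ≤ f i := fun i hi => hf i (Finset.mem_cons_of_mem hi)
    have hprod : 0 ≤ ∏ i ∈ s, f i := Finset.prod_nonneg hrest
    calc 1 + f a * ∏ i ∈ s, f i
        ≤ (1 + f a) * (1 + ∏ i ∈ s, f i) := by nlinarith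
      _ ≤ (1 + f a) * ∏ i ∈ s, (1 + f i) := by
          apply mul_le_mul_of_nonneg_left (ih hrest) (by linarith)

lemma psd_det_nonneg {ν : ℕ} {X : Matrix (Fin ν) (Fin ν) ℂ} (hX : X.PosSemidef) :
    0 ≤ X.det := by
  rw [hX.isHermitian.det_eq_prod_eigenvalues]
  have : ∀ i ∈ Finset.univ, (0:ℂ) ≤ (hX.isHermitian.eigenvalues i : ℂ) := by
    intro i _
    rw [Complex.zero_le_real]
    exact hX.eigenvalues_nonneg i
  exact Finset.prod_nonneg this

lemma psd_posDef_of_det_ne_zero {ν : ℕ} {X : Matrix (Fin ν) (Fin ν) ℂ} (hX : X.PosSemidef)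
    (h : X.det ≠ 0) : X.PosDef := by
  refine posDef_iff_dotProduct_mulVec.mpr ⟨hX.isHermitian, fun z hz => ?_⟩
  refine lt_of_le_of_ne (hX.dotProduct_mulVec_nonneg z) (Ne.symm fun heq => hz ?_)
  have hz0 : X *ᵥ z = 0 := (hX.dotProduct_mulVec_zero_iff z).mp heq
  have : X⁻¹ *ᵥ (X *ᵥ z) = z := by
    rw [mulVec_mulVec, nonsing_inv_mul X (Ne.isUnit h), one_mulVec]
  rw [hz0, mulVec_zero] at this
  exact this.symm

lemma one_add_det_le_det_one_add {ν : ℕ} (hν : 0 < ν) {M : Matrix (Fin ν) (Fin ν) ℂ}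
    (hM : M.PosSemidef) : 1 + M.det ≤ (1 + M).det := by
  have hH := hM.isHermitian
  set U : Matrix (Fin ν) (Fin ν) ℂ := (hH.eigenvectorUnitary : Matrix (Fin ν) (Fin ν) ℂ) with hUdef
  set D : Matrix (Fin ν) (Fin ν) ℂ := diagonal (RCLike.ofReal ∘ hH.eigenvalues) with hDdef
  have hU : U * star U = 1 := Matrix.mem_unitaryGroup_iff.mp hH.eigenvectorUnitary.2
  have hspec : M = U * D * star U := hH.spectral_theorem
  have hone : (1 : Matrix (Fin ν) (Fin ν) ℂ) + M = U * (1 + D) * star U := by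
    rw [mul_add, add_mul, mul_one, hU, ← hspec]
  have hdet1 : det (U * star U) = 1 := by rw [hU, det_one]
  have hdetU : det U * det (star U) = 1 := by rw [← det_mul]; exact hdet1
  have hdet_oneM : det (1 + M) = det (1 + D) := by
    rw [hone, det_mul, det_mul, mul_right_comm, hdetU, one_mul]
  have hdetM : det M = det D := by
    rw [hspec, det_mul, det_mul, mul_right_comm, hdetU, one_mul]
  rw [hdet_oneM, hdetM]
  have h1D : (1 : Matrix (Fin ν) (Fin ν) ℂ) + D = diagonal (fun i => 1 + (hH.eigenvalues i : ℂ)) := by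
    rw [hDdef, ← diagonal_one, diagonal_add]
    rfl
  rw [h1D, det_diagonal]
  have hreal := one_add_prod_le_prod_one_add Finset.univ (Finset.univ_nonempty_iff.mpr ⟨⟨0, hν⟩⟩)
    hH.eigenvalues (fun i _ => hM.eigenvalues_nonneg i)
  simp only [hDdef, det_diagonal, Function.comp_apply]
  have hC : ((1 + ∏ i : Fin ν, hH.eigenvalues i : ℝ) : ℂ)
      ≤ ((∏ x : Fin ν, (1 + hH.eigenvalues x) : ℝ) : ℂ) := Complex.real_le_real.mpr hreal
  simp only [show ((RCLike.ofReal : ℝ → ℂ)) = Complex.ofReal from rfl]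
  exact_mod_cast hC

open scoped MatrixOrder in
lemma det_add_det_le_of_posDef {ν : ℕ} (hν : 0 < ν) {X Y : Matrix (Fin ν) (Fin ν) ℂ}
    (hX : X.PosDef) (hY : Y.PosSemidef) : X.det + Y.det ≤ (X + Y).det := by
  have hXs := hX.posSemidef
  set S := CFC.sqrt X with hSdef
  have hS : S.PosSemidef := nonneg_iff_posSemidef.mp (CFC.sqrt_nonneg X)
  have hSS : S * S = X := CFC.sqrt_mul_sqrt_self X hXs.nonneg
  have hdetS : S.det ≠ 0 := by
    intro h0
    have : X.det = 0 := by rw [← hSS, det_mul, h0, zero_mul]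
    exact hX.det_pos.ne' this
  have hSH : Sᴴ = S := hS.isHermitian
  have hSinvH : (S⁻¹)ᴴ = S⁻¹ := by rw [conjTranspose_nonsing_inv, hSH]
  set M := S⁻¹ * Y * S⁻¹ with hMdef
  have hM : M.PosSemidef := by
    have := hY.conjTranspose_mul_mul_same (B := S⁻¹)
    rwa [hSinvH] at this
  have hSinv : S * S⁻¹ = 1 := mul_nonsing_inv S (Ne.isUnit hdetS)
  have hinvS : S⁻¹ * S = 1 := nonsing_inv_mul S (Ne.isUnit hdetS)
  have hXY : X + Y = S * (1 + M) * S := by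
    rw [mul_add, mul_one, add_mul, hSS, hMdef]
    congr 1
    rw [← mul_assoc, ← mul_assoc, hSinv, one_mul, mul_assoc, hinvS, mul_one]
  have hdetM : X.det * M.det = Y.det := by
    rw [hMdef, det_mul, det_mul, det_nonsing_inv, Ring.inverse_eq_inv']
    rw [← hSS, det_mul]; field_simp
  have hdetXY : (X + Y).det = X.det * (1 + M).det := by
    rw [hXY, det_mul, det_mul, mul_right_comm, mul_comm S.det, ← det_mul, hSS]
  rw [hdetXY]
  calc X.det + Y.det = X.det * (1 + M.det) := by rw [mul_add, mul_one, hdetM]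
    _ ≤ X.det * (1 + M).det :=
        mul_le_mul_of_nonneg_left (one_add_det_le_det_one_add hν hM) (le_of_lt hX.det_pos)

lemma det_add_det_le {ν : ℕ} (hν : 0 < ν) {X Y : Matrix (Fin ν) (Fin ν) ℂ}
    (hX : X.PosSemidef) (hY : Y.PosSemidef) : X.det + Y.det ≤ (X + Y).det := by
  by_cases hdX : X.det = 0
  · by_cases hdY : Y.det = 0
    · rw [hdX, hdY, add_zero]
      exact psd_det_nonneg (hX.add hY)
    · have hYpd := psd_posDef_of_det_ne_zero hY hdY
      have h := det_add_det_le_of_posDef hν hYpd hX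
      rw [hdX, zero_add, add_comm X Y]
      simpa [hdX] using h
  · exact det_add_det_le_of_posDef hν (psd_posDef_of_det_ne_zero hX hdX) hY

/-! ### The key determinant factorization -/

lemma det_rankOne_add_border {ν : ℕ} (c : Fin (ν+1) → ℂ) (hc : c 0 ≠ 0)
    (M : Matrix (Fin (ν+1)) (Fin (ν+1)) ℂ)
    (hrow : ∀ k, M 0 k = 0) (hcol : ∀ j, M j 0 = 0) :
    ((Matrix.of fun j k => c j * star (c k)) + M).det
      = (c 0 * star (c 0)) * (M.submatrix Fin.succ Fin.succ).det := by
  have hsc : star (c 0) ≠ 0 := star_ne_zero.mpr hc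
  set F : Matrix (Fin (ν+1)) (Fin (ν+1)) ℂ :=
    Matrix.of fun j p => if p = 0 then star (c 0) * c j else M j p with hF
  set U : Matrix (Fin (ν+1)) (Fin (ν+1)) ℂ :=
    Matrix.of fun p k => if p = 0 then star (c k) / star (c 0) else if p = k then 1 else 0 with hU
  have hFU : (Matrix.of fun j k => c j * star (c k)) + M = F * U := by
    ext j k
    rw [Matrix.add_apply, of_apply, mul_apply]
    by_cases hk : k = 0
    · subst hk
      rw [Finset.sum_eq_single_of_mem 0 (mem_univ 0)]
      · have h1 : F j 0 = star (c 0) * c j := by simp [hF]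
        have h2 : U 0 0 = star (c 0) / star (c 0) := by simp [hU]
        rw [h1, h2, div_self hsc, mul_one, hcol j, add_zero]
        ring
      · intro p _ hp
        have : U p 0 = 0 := by simp [hU, hp]
        rw [this, mul_zero]
    · rw [Finset.sum_eq_add_of_mem 0 k (mem_univ _) (mem_univ _) (Ne.symm hk)]
      · have h1 : F j 0 * U 0 k = c j * star (c k) := by
          have e1 : F j 0 = star (c 0) * c j := by simp [hF]
          have e2 : U 0 k = star (c k) / star (c 0) := by simp [hU]
          rw [e1, e2]
          calc (star (c 0) * c j) * (star (c k) / star (c 0))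
              = (c j * star (c k)) * (star (c 0) / star (c 0)) := by ring
            _ = c j * star (c k) := by rw [div_self hsc, mul_one]
        have h2 : F j k * U k k = M j k := by
          have e1 : F j k = M j k := by simp [hF, hk]
          have e2 : U k k = 1 := by simp [hU, hk]
          rw [e1, e2, mul_one]
        rw [h1, h2]
      · intro p _ hp
        have : U p k = 0 := by simp [hU, hp.1, hp.2]
        rw [this, mul_zero]
  have hdetU : U.det = 1 := by
    have htri : U.BlockTriangular id := by
      intro i j hij
      have hi0 : i ≠ 0 := by
        intro h; subst h; exact Fin.not_lt_zero _ hij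
      have hij' : i ≠ j := by intro h; subst h; exact lt_irrefl _ hij
      simp [hU, hi0, hij']
    rw [det_of_upperTriangular htri]
    apply Finset.prod_eq_one
    intro i _
    by_cases hi : i = 0
    · subst hi
      have : U 0 0 = star (c 0) / star (c 0) := by simp [hU]
      rw [this, div_self hsc]
    · simp [hU, hi]
  have hdetF : F.det = (star (c 0) * c 0) * (M.submatrix Fin.succ Fin.succ).det := by
    rw [det_succ_row_zero]
    rw [Finset.sum_eq_single_of_mem 0 (mem_univ 0)]
    · have hF00 : F 0 0 = star (c 0) * c 0 := by simp [hF]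
      have hsub : F.submatrix Fin.succ ((0 : Fin (ν+1)).succAbove) =
          M.submatrix Fin.succ Fin.succ := by
        rw [Fin.succAbove_zero]
        ext a b
        simp [hF, Fin.succ_ne_zero]
      rw [hsub, hF00]
      simp
    · intro j _ hj
      have : F 0 j = 0 := by simp [hF, hrow j, hj]
      rw [this, mul_zero, zero_mul]
  rw [hFU, det_mul, hdetU, hdetF, mul_one]
  ring

/-! ### The lower-triangular Toeplitz congruence -/

noncomputable def Lmat {ν : ℕ} (x : Fin (ν+1) → ℂ) : Matrix (Fin ν) (Fin ν) ℂ :=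
  Matrix.of fun j p => if p ≤ j then x ((j - p).castSucc) else 0

lemma Lmat_apply {ν : ℕ} (x : Fin (ν+1) → ℂ) (j p : Fin ν) :
    Lmat x j p = if p ≤ j then x ((j - p).castSucc) else 0 := rfl

lemma fin_sub_self_castSucc {ν : ℕ} (j : Fin ν) : (j - j).castSucc = 0 := by
  apply Fin.ext
  simp [fin_sub_val (le_refl j)]

lemma det_Lmat {ν : ℕ} (x : Fin (ν+1) → ℂ) : (Lmat x).det = x 0 ^ ν := by
  have htri : (Lmat x).BlockTriangular OrderDual.toDual := by
    intro i j hij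
    have : ¬ (j ≤ i) := not_le.mpr hij
    simp [Lmat_apply, this]
  rw [det_of_lowerTriangular _ htri]
  have : ∀ i : Fin ν, Lmat x i i = x 0 := by
    intro i
    rw [Lmat_apply, if_pos (le_refl i), fin_sub_self_castSucc]
  rw [Finset.prod_congr rfl (fun i _ => this i)]
  simp

lemma sum_ite_le {ν : ℕ} (j : Fin ν) (f : Fin ν → ℂ) :
    ∑ p : Fin ν, (if p ≤ j then f p else 0) = ∑ p ∈ Iic j, f p := by
  rw [show Iic j = Finset.filter (fun p => p ≤ j) Finset.univ from by ext; simp, Finset.sum_filter]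

lemma Lmat_conj_apply {ν : ℕ} (w : Fin (ν+1) → ℂ) (C : Matrix (Fin (ν+1)) (Fin (ν+1)) ℂ)
    (j k : Fin ν) :
    (Lmat w * (C.submatrix Fin.succ Fin.succ) * (Lmat w)ᴴ) j k
      = ∑ q ∈ Iic k, ∑ p ∈ Iic j,
          C p.succ q.succ * (w ((j - p).castSucc) * star (w ((k - q).castSucc))) := by
  rw [mul_apply]
  have h1 : ∀ q : Fin ν, (Lmat w * (C.submatrix Fin.succ Fin.succ)) j q * ((Lmat w)ᴴ q k)
      = if q ≤ k then ∑ p ∈ Iic j,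
          C p.succ q.succ * (w ((j - p).castSucc) * star (w ((k - q).castSucc))) else 0 := by
    intro q
    rw [conjTranspose_apply, mul_apply, Lmat_apply w k q]
    by_cases hq : q ≤ k
    · rw [if_pos hq, if_pos hq, Finset.sum_mul]
      have h2 : ∀ p : Fin ν,
          (Lmat w j p * (C.submatrix Fin.succ Fin.succ) p q) * star (w ((k - q).castSucc))
          = if p ≤ j then C p.succ q.succ * (w ((j - p).castSucc) * star (w ((k - q).castSucc)))
            else 0 := by
        intro p
        rw [Lmat_apply, submatrix_apply]
        by_cases hp : p ≤ j
        · rw [if_pos hp, if_pos hp]; ring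
        · rw [if_neg hp, if_neg hp, zero_mul, zero_mul]
      rw [Finset.sum_congr rfl (fun p _ => h2 p), sum_ite_le]
    · rw [if_neg hq, if_neg hq, star_zero, mul_zero]
  rw [Finset.sum_congr rfl (fun q _ => h1 q), sum_ite_le]

lemma jury_rankOne_right_submatrix {ν : ℕ} (y : Fin (ν+1) → ℂ)
    (A : Matrix (Fin (ν+1)) (Fin (ν+1)) ℂ)
    (hrow : ∀ k, A 0 k = 0) (hcol : ∀ j, A j 0 = 0) :
    (jury A (Matrix.of fun a b => y a * star (y b))).submatrix Fin.succ Fin.succ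
      = Lmat y * (A.submatrix Fin.succ Fin.succ) * (Lmat y)ᴴ := by
  ext j k
  rw [submatrix_apply, jury_apply]
  rw [sum_Iic_succ_succ j
    (fun m => ∑ n ∈ Iic k.succ, A m n *
      ((Matrix.of fun a b => y a * star (y b)) (j.succ - m) (k.succ - n)))
    (by simp [hrow])]
  have step2 : ∀ p ∈ Iic j,
      (∑ n ∈ Iic k.succ, A p.succ n *
        ((Matrix.of fun a b => y a * star (y b)) (j.succ - p.succ) (k.succ - n)))
      = ∑ q ∈ Iic k, A p.succ q.succ *
          (y ((j - p).castSucc) * star (y ((k - q).castSucc))) := by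
    intro p hp
    rw [sum_Iic_succ_succ k
      (fun n => A p.succ n *
        ((Matrix.of fun a b => y a * star (y b)) (j.succ - p.succ) (k.succ - n)))
      (by simp [hcol])]
    apply Finset.sum_congr rfl
    intro q hq
    rw [mem_Iic] at hp hq
    rw [of_apply, fin_succ_sub_succ hp, fin_succ_sub_succ hq]
  rw [Finset.sum_congr rfl step2, Lmat_conj_apply, Finset.sum_comm]

lemma jury_rankOne_left_submatrix {ν : ℕ} (x : Fin (ν+1) → ℂ)
    (B : Matrix (Fin (ν+1)) (Fin (ν+1)) ℂ)
    (hrow : ∀ k, B 0 k = 0) (hcol : ∀ j, B j 0 = 0) :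
    (jury (Matrix.of fun a b => x a * star (x b)) B).submatrix Fin.succ Fin.succ
      = Lmat x * (B.submatrix Fin.succ Fin.succ) * (Lmat x)ᴴ := by
  ext j k
  rw [submatrix_apply, jury_apply]
  rw [sum_Iic_succ_castSucc j
    (fun m => ∑ n ∈ Iic k.succ, (Matrix.of fun a b => x a * star (x b)) m n *
      B (j.succ - m) (k.succ - n))
    (by simp [sub_self, hrow])]
  have step2 : ∀ p ∈ Iic j,
      (∑ n ∈ Iic k.succ, (Matrix.of fun a b => x a * star (x b)) p.castSucc n *
        B (j.succ - p.castSucc) (k.succ - n))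
      = ∑ q ∈ Iic k, (x p.castSucc * star (x q.castSucc)) *
          B (j - p).succ (k - q).succ := by
    intro p hp
    rw [sum_Iic_succ_castSucc k
      (fun n => (Matrix.of fun a b => x a * star (x b)) p.castSucc n *
        B (j.succ - p.castSucc) (k.succ - n))
      (by simp [sub_self, hcol])]
    apply Finset.sum_congr rfl
    intro q hq
    rw [mem_Iic] at hp hq
    rw [of_apply, fin_succ_sub_castSucc hp, fin_succ_sub_castSucc hq]
  rw [Finset.sum_congr rfl step2]
  rw [sum_Iic_rev j (fun p => ∑ q ∈ Iic k, (x p.castSucc * star (x q.castSucc)) *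
    B (j - p).succ (k - q).succ)]
  have step3 : ∀ p ∈ Iic j,
      (∑ q ∈ Iic k, (x (j - p).castSucc * star (x q.castSucc)) *
        B (j - (j - p)).succ (k - q).succ)
      = ∑ q ∈ Iic k, B p.succ q.succ *
          (x ((j - p).castSucc) * star (x ((k - q).castSucc))) := by
    intro p hp
    rw [mem_Iic] at hp
    rw [sum_Iic_rev k (fun q => (x (j - p).castSucc * star (x q.castSucc)) *
      B (j - (j - p)).succ (k - q).succ)]
    apply Finset.sum_congr rfl
    intro q hq
    rw [mem_Iic] at hq
    rw [fin_sub_sub hp, fin_sub_sub hq]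
    ring
  rw [Finset.sum_congr rfl step3, Lmat_conj_apply, Finset.sum_comm]

/-! ### Schur-complement-type positivity -/

lemma sub_rankOne_posSemidef {ν : ℕ} {A : Matrix (Fin (ν+1)) (Fin (ν+1)) ℂ} (hA : A.PosSemidef)
    {α : ℝ} (hα : 0 < α) (ha : A 0 0 = ((α:ℂ))^2) :
    (A - Matrix.of fun j k => (A j 0 / (α:ℂ)) * star (A k 0 / (α:ℂ))).PosSemidef := by
  have hαC : ((α:ℂ)) ≠ 0 := by exact_mod_cast hα.ne'
  have hherm : ∀ i j, star (A j i) = A i j := fun i j => hA.isHermitian.apply i j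
  have hsα : star ((α:ℂ)) = (α:ℂ) := by rw [Complex.star_def, Complex.conj_ofReal]
  set W : Matrix (Fin (ν+1)) (Fin (ν+1)) ℂ :=
    Matrix.of fun j k => (A j 0 / (α:ℂ)) * star (A k 0 / (α:ℂ)) with hW
  have hWH : W.IsHermitian := by
    show Wᴴ = W
    ext j k
    rw [conjTranspose_apply, hW, of_apply, of_apply, star_mul', star_star]
    ring
  refine posSemidef_iff_dotProduct_mulVec.mpr ⟨?_, ?_⟩
  · exact hA.isHermitian.sub hWH
  · intro z
    set σ : ℂ := (A *ᵥ z) 0 with hσ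
    set t : ℂ := σ / ((α:ℂ))^2 with ht
    set e0 : Fin (ν+1) → ℂ := Pi.single 0 1 with he0
    have hse0 : star e0 = e0 := by
      ext i
      rw [he0, Pi.star_apply]
      by_cases hi : i = 0
      · subst hi; simp
      · simp [Pi.single_apply, hi]
    have hAe0 : A *ᵥ e0 = fun i => A i 0 := by
      rw [he0, mulVec_single]
      ext i; simp
    have hσsum : σ = ∑ k, A 0 k * z k := rfl
    have hstarσ : star σ = ∑ i, star (z i) * A i 0 := by
      rw [hσsum, star_sum]
      apply Finset.sum_congr rfl
      intro k _
      rw [star_mul', hherm k 0]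
      ring
    have h1 : e0 ⬝ᵥ (A *ᵥ z) = σ := by
      rw [he0, single_dotProduct, one_mul, hσ]
    have h2 : star z ⬝ᵥ (A *ᵥ e0) = star σ := by
      rw [hAe0, hstarσ]
      rfl
    have h3 : e0 ⬝ᵥ (A *ᵥ e0) = ((α:ℂ))^2 := by
      rw [hAe0, he0, single_dotProduct, one_mul, ha]
    have hstart : star t = star σ / ((α:ℂ))^2 := by
      rw [ht, star_div₀, star_pow, hsα]
    have hu := hA.dotProduct_mulVec_nonneg (z - t • e0)
    have hexp : star (z - t • e0) ⬝ᵥ (A *ᵥ (z - t • e0))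
        = star z ⬝ᵥ (A *ᵥ z) - star σ * σ / ((α:ℂ))^2 := by
      rw [star_sub, star_smul, hse0, mulVec_sub, mulVec_smul]
      rw [sub_dotProduct, dotProduct_sub, dotProduct_sub]
      rw [smul_dotProduct, smul_dotProduct, dotProduct_smul, dotProduct_smul]
      rw [h1, h2, h3, hstart, ht]
      field_simp
      have h2 : (α:ℂ)^2 * ((α:ℂ)⁻¹)^2 = 1 := by rw [← mul_pow, mul_inv_cancel₀ hαC, one_pow]
      linear_combination (star σ * σ * ((α:ℂ)^2 * ((α:ℂ)⁻¹)^2 - 1)) * h2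
    have hWq : star z ⬝ᵥ (W *ᵥ z) = star σ * σ / ((α:ℂ))^2 := by
      have hWz : W *ᵥ z = fun j => (A j 0 / (α:ℂ)) * ∑ k, star (A k 0 / (α:ℂ)) * z k := by
        ext j
        show ∑ k, W j k * z k = _
        rw [Finset.mul_sum]
        apply Finset.sum_congr rfl
        intro k _
        rw [hW, of_apply]
        ring
      rw [hWz]
      have hfact : star z ⬝ᵥ (fun j => (A j 0 / (α:ℂ)) * ∑ k, star (A k 0 / (α:ℂ)) * z k)
          = (∑ j, star (z j) * (A j 0 / (α:ℂ))) * (∑ k, star (A k 0 / (α:ℂ)) * z k) := by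
        rw [dotProduct, Finset.sum_mul]
        apply Finset.sum_congr rfl
        intro j _
        rw [← mul_assoc, Pi.star_apply]
      rw [hfact]
      have hs1 : (∑ j, star (z j) * (A j 0 / (α:ℂ))) = star σ / (α:ℂ) := by
        rw [hstarσ, Finset.sum_div]
        apply Finset.sum_congr rfl
        intro j _
        ring
      have hs2 : (∑ k, star (A k 0 / (α:ℂ)) * z k) = σ / (α:ℂ) := by
        rw [hσsum, Finset.sum_div]
        apply Finset.sum_congr rfl
        intro k _
        rw [star_div₀, hherm 0 k, hsα]
        ring
      rw [hs1, hs2, div_mul_div_comm, ← pow_two]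
    have hgoal : star z ⬝ᵥ ((A - W) *ᵥ z)
        = star (z - t • e0) ⬝ᵥ (A *ᵥ (z - t • e0)) := by
      rw [sub_mulVec, dotProduct_sub, hWq, hexp]
    rw [hgoal]
    exact hu

/-! ### Rank-one matrices are positive semidefinite; value of the quadratic form at `e₀` -/

lemma rankOne_posSemidef {ν : ℕ} (x : Fin ν → ℂ) :
    (Matrix.of fun j k => x j * star (x k)).PosSemidef := by
  refine posSemidef_iff_dotProduct_mulVec.mpr ⟨?_, ?_⟩
  · show _ᴴ = _
    ext j k
    rw [conjTranspose_apply, of_apply, of_apply, star_mul', star_star]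
    ring
  · intro z
    set s : ℂ := ∑ k, star (x k) * z k with hs
    have hWz : (Matrix.of fun j k => x j * star (x k)) *ᵥ z = fun j => x j * s := by
      ext j
      show ∑ k, (Matrix.of fun j k => x j * star (x k)) j k * z k = _
      rw [hs, Finset.mul_sum]
      apply Finset.sum_congr rfl
      intro k _
      rw [of_apply]
      ring
    have hfact : star z ⬝ᵥ (fun j => x j * s) = (∑ j, star (z j) * x j) * s := by
      rw [dotProduct, Finset.sum_mul]
      apply Finset.sum_congr rfl
      intro j _
      rw [← mul_assoc, Pi.star_apply]
    have hstars : star s = ∑ j, star (z j) * x j := by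
      rw [hs, star_sum]
      apply Finset.sum_congr rfl
      intro j _
      rw [star_mul', star_star]
      ring
    rw [hWz, hfact, ← hstars]
    exact star_mul_self_nonneg s

lemma quad_e0 {ν : ℕ} (A : Matrix (Fin (ν+1)) (Fin (ν+1)) ℂ) :
    star ((Pi.single 0 1 : Fin (ν+1) → ℂ)) ⬝ᵥ (A *ᵥ (Pi.single 0 1 : Fin (ν+1) → ℂ)) = A 0 0 := by
  have hse0 : star ((Pi.single 0 1 : Fin (ν+1) → ℂ)) = (Pi.single 0 1 : Fin (ν+1) → ℂ) := by
    ext i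
    rw [Pi.star_apply]
    by_cases hi : i = 0
    · subst hi; simp
    · simp [Pi.single_apply, hi]
  have hmv : A *ᵥ (Pi.single 0 1 : Fin (ν+1) → ℂ) = fun i => A i 0 * 1 :=
    mulVec_single A (0 : Fin (ν+1)) (1 : ℂ)
  rw [hse0, single_dotProduct, one_mul, hmv]
  simp

/-! ### The main theorem -/

/-- **Theorem (The inequality).** For `N ≥ 2` and positive semidefinite
`A, B ∈ ℂ^{N×N}`, one has `det (A ⋄ B) ≥ b₀₀^N det A + a₀₀^N det B`. -/
theorem jury_det_ge_add {N : ℕ} (hN : 2 ≤ N) (A B : Matrix (Fin N) (Fin N) ℂ)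
    (hA : A.PosSemidef) (hB : B.PosSemidef) :
    B ⟨0, by omega⟩ ⟨0, by omega⟩ ^ N * A.det + A ⟨0, by omega⟩ ⟨0, by omega⟩ ^ N * B.det
      ≤ (jury A B).det := by
  obtain ⟨n, rfl⟩ : ∃ n, N = n + 2 := ⟨N - 2, by omega⟩
  simp only [Fin.mk_zero]
  -- diagonal entries are nonnegative reals
  have hA00 : 0 ≤ A 0 0 := by
    have := hA.dotProduct_mulVec_nonneg (Pi.single 0 1)
    rwa [quad_e0] at this
  have hB00 : 0 ≤ B 0 0 := by
    have := hB.dotProduct_mulVec_nonneg (Pi.single 0 1)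
    rwa [quad_e0] at this
  have haim : (A 0 0).im = 0 := by have := Complex.nonneg_iff.mp hA00; tauto
  have hbim : (B 0 0).im = 0 := by have := Complex.nonneg_iff.mp hB00; tauto
  have hare : 0 ≤ (A 0 0).re := by have := Complex.nonneg_iff.mp hA00; tauto
  have hbre : 0 ≤ (B 0 0).re := by have := Complex.nonneg_iff.mp hB00; tauto
  set a : ℝ := (A 0 0).re with hadef
  set b : ℝ := (B 0 0).re with hbdef
  have haRe : A 0 0 = (a : ℂ) := by apply Complex.ext <;> simp [haim, hadef]
  have hbRe : B 0 0 = (b : ℂ) := by apply Complex.ext <;> simp [hbim, hbdef]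
  -- degenerate cases
  by_cases haz : a = 0
  · have hA000 : A 0 0 = 0 := by rw [haRe, haz]; simp
    have hAe0 : A *ᵥ (Pi.single 0 1) = 0 := by
      apply (hA.dotProduct_mulVec_zero_iff (Pi.single 0 1)).mp
      rw [quad_e0, hA000]
    have hcol : ∀ j, A j 0 = 0 := by
      intro j
      have := congrFun hAe0 j
      rw [mulVec_single] at this
      simpa using this
    have hdetA : A.det = 0 := det_eq_zero_of_column_eq_zero 0 hcol
    rw [hdetA, hA000, mul_zero, zero_add, zero_pow (by omega), zero_mul]
    exact psd_det_nonneg (jury_posSemidef hA hB)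
  by_cases hbz : b = 0
  · have hB000 : B 0 0 = 0 := by rw [hbRe, hbz]; simp
    have hBe0 : B *ᵥ (Pi.single 0 1) = 0 := by
      apply (hB.dotProduct_mulVec_zero_iff (Pi.single 0 1)).mp
      rw [quad_e0, hB000]
    have hcol : ∀ j, B j 0 = 0 := by
      intro j
      have := congrFun hBe0 j
      rw [mulVec_single] at this
      simpa using this
    have hdetB : B.det = 0 := det_eq_zero_of_column_eq_zero 0 hcol
    rw [hdetB, hB000, mul_zero, add_zero, zero_pow (by omega), zero_mul]
    exact psd_det_nonneg (jury_posSemidef hA hB)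
  -- main case
  have hapos : 0 < a := lt_of_le_of_ne hare (Ne.symm haz)
  have hbpos : 0 < b := lt_of_le_of_ne hbre (Ne.symm hbz)
  set α : ℝ := Real.sqrt a with hαdef
  set β : ℝ := Real.sqrt b with hβdef
  have hα : 0 < α := Real.sqrt_pos.mpr hapos
  have hβ : 0 < β := Real.sqrt_pos.mpr hbpos
  have hαC : ((α:ℂ)) ≠ 0 := by exact_mod_cast hα.ne'
  have hβC : ((β:ℂ)) ≠ 0 := by exact_mod_cast hβ.ne'
  have hsα : star ((α:ℂ)) = (α:ℂ) := by rw [Complex.star_def, Complex.conj_ofReal]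
  have hsβ : star ((β:ℂ)) = (β:ℂ) := by rw [Complex.star_def, Complex.conj_ofReal]
  have hα2 : ((α:ℂ))^2 = (a:ℂ) := by
    rw [← Complex.ofReal_pow, hαdef, Real.sq_sqrt hare]
  have hβ2 : ((β:ℂ))^2 = (b:ℂ) := by
    rw [← Complex.ofReal_pow, hβdef, Real.sq_sqrt hbre]
  have haα : A 0 0 = ((α:ℂ))^2 := by rw [haRe, hα2]
  have hbβ : B 0 0 = ((β:ℂ))^2 := by rw [hbRe, hβ2]
  set x : Fin (n+2) → ℂ := fun j => A j 0 / (α:ℂ) with hxdef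
  set y : Fin (n+2) → ℂ := fun j => B j 0 / (β:ℂ) with hydef
  set Wx : Matrix (Fin (n+2)) (Fin (n+2)) ℂ := Matrix.of fun j k => x j * star (x k) with hWx
  set Wy : Matrix (Fin (n+2)) (Fin (n+2)) ℂ := Matrix.of fun j k => y j * star (y k) with hWy
  set A' : Matrix (Fin (n+2)) (Fin (n+2)) ℂ := A - Wx with hA'def
  set B' : Matrix (Fin (n+2)) (Fin (n+2)) ℂ := B - Wy with hB'def
  have hA'psd : A'.PosSemidef := by
    rw [hA'def, hWx, hxdef]
    exact sub_rankOne_posSemidef hA hα haα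
  have hB'psd : B'.PosSemidef := by
    rw [hB'def, hWy, hydef]
    exact sub_rankOne_posSemidef hB hβ hbβ
  have hx0 : x 0 = (α:ℂ) := by
    rw [hxdef]
    show A 0 0 / (α:ℂ) = (α:ℂ)
    rw [haα, pow_two, mul_div_assoc, div_self hαC, mul_one]
  have hy0 : y 0 = (β:ℂ) := by
    rw [hydef]
    show B 0 0 / (β:ℂ) = (β:ℂ)
    rw [hbβ, pow_two, mul_div_assoc, div_self hβC, mul_one]
  have hsx0 : star (x 0) = (α:ℂ) := by rw [hx0, hsα]
  have hsy0 : star (y 0) = (β:ℂ) := by rw [hy0, hsβ]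
  have hAherm : ∀ i j, star (A j i) = A i j := fun i j => hA.isHermitian.apply i j
  have hBherm : ∀ i j, star (B j i) = B i j := fun i j => hB.isHermitian.apply i j
  have hA'col : ∀ j, A' j 0 = 0 := by
    intro j
    rw [hA'def, Matrix.sub_apply, hWx, of_apply, hsx0, hxdef]
    show A j 0 - A j 0 / (α:ℂ) * (α:ℂ) = 0
    rw [div_mul_cancel₀ _ hαC, sub_self]
  have hA'row : ∀ k, A' 0 k = 0 := by
    intro k
    rw [hA'def, Matrix.sub_apply, hWx, of_apply, hx0, hxdef]
    show A 0 k - (α:ℂ) * star (A k 0 / (α:ℂ)) = 0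
    rw [star_div₀, hAherm 0 k, hsα, mul_comm, div_mul_cancel₀ _ hαC, sub_self]
  have hB'col : ∀ j, B' j 0 = 0 := by
    intro j
    rw [hB'def, Matrix.sub_apply, hWy, of_apply, hsy0, hydef]
    show B j 0 - B j 0 / (β:ℂ) * (β:ℂ) = 0
    rw [div_mul_cancel₀ _ hβC, sub_self]
  have hB'row : ∀ k, B' 0 k = 0 := by
    intro k
    rw [hB'def, Matrix.sub_apply, hWy, of_apply, hy0, hydef]
    show B 0 k - (β:ℂ) * star (B k 0 / (β:ℂ)) = 0
    rw [star_div₀, hBherm 0 k, hsβ, mul_comm, div_mul_cancel₀ _ hβC, sub_self]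
  -- the decomposition of the Jury product
  have hAeq : A = Wx + A' := by rw [hA'def]; ext j k; simp
  have hBeq : B = Wy + B' := by rw [hB'def]; ext j k; simp
  have hrk : jury Wx Wy = Matrix.of fun j k =>
      (∑ m ∈ Iic j, x m * y (j - m)) * star (∑ nn ∈ Iic k, x nn * y (k - nn)) := by
    rw [hWx, hWy]; exact jury_rankOne x y
  have hdecomp : jury A B = (Matrix.of fun j k =>
      (∑ m ∈ Iic j, x m * y (j - m)) * star (∑ nn ∈ Iic k, x nn * y (k - nn)))
      + (jury Wx B' + (jury A' Wy + jury A' B')) := by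
    conv_lhs => rw [hAeq, hBeq]
    rw [jury_add_left, jury_add_right, jury_add_right, hrk]
    abel
  -- borders of the remainder vanish
  have hMrow : ∀ k, (jury Wx B' + (jury A' Wy + jury A' B')) 0 k = 0 := by
    intro k
    rw [Matrix.add_apply, Matrix.add_apply, jury_row_zero_right Wx B' hB'row k,
      jury_row_zero_left A' Wy hA'row k, jury_row_zero_left A' B' hA'row k]
    simp
  have hMcol : ∀ j, (jury Wx B' + (jury A' Wy + jury A' B')) j 0 = 0 := by
    intro j
    rw [Matrix.add_apply, Matrix.add_apply, jury_col_zero_right Wx B' hB'col j,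
      jury_col_zero_left A' Wy hA'col j, jury_col_zero_left A' B' hA'col j]
    simp
  -- value of c at zero
  have hc0 : (∑ m ∈ Iic (0 : Fin (n+2)), x m * y ((0 : Fin (n+2)) - m)) = (α:ℂ) * (β:ℂ) := by
    rw [Iic_zero_fin, Finset.sum_singleton, sub_zero, hx0, hy0]
  have hc0ne : (∑ m ∈ Iic (0 : Fin (n+2)), x m * y ((0 : Fin (n+2)) - m)) ≠ 0 := by
    rw [hc0]; exact mul_ne_zero hαC hβC
  -- determinant of the Jury product
  have hdetJ : (jury A B).det = (((a*b : ℝ)):ℂ) *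
      ((jury Wx B' + (jury A' Wy + jury A' B')).submatrix Fin.succ Fin.succ).det := by
    rw [hdecomp]
    rw [det_rankOne_add_border (fun j => ∑ m ∈ Iic j, x m * y (j - m)) hc0ne _ hMrow hMcol]
    congr 1
    show (∑ m ∈ Iic (0 : Fin (n+2)), x m * y ((0 : Fin (n+2)) - m)) *
      star (∑ m ∈ Iic (0 : Fin (n+2)), x m * y ((0 : Fin (n+2)) - m)) = _
    rw [hc0, star_mul', hsβ, hsα, Complex.ofReal_mul, ← hα2, ← hβ2]
    ring
  -- determinants of A and B
  have hx0ne : x 0 ≠ 0 := by rw [hx0]; exact hαC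
  have hy0ne : y 0 ≠ 0 := by rw [hy0]; exact hβC
  have hdetA : A.det = ((a:ℝ):ℂ) * (A'.submatrix Fin.succ Fin.succ).det := by
    have h := det_rankOne_add_border x hx0ne A' hA'row hA'col
    have heq : (Matrix.of fun j k => x j * star (x k)) + A' = A := by
      rw [← hWx, hA'def]; ext j k; simp
    rw [heq] at h
    rw [h, hx0, hsα, ← Complex.ofReal_mul, Real.mul_self_sqrt hare]
  have hdetB : B.det = ((b:ℝ):ℂ) * (B'.submatrix Fin.succ Fin.succ).det := by
    have h := det_rankOne_add_border y hy0ne B' hB'row hB'col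
    have heq : (Matrix.of fun j k => y j * star (y k)) + B' = B := by
      rw [← hWy, hB'def]; ext j k; simp
    rw [heq] at h
    rw [h, hy0, hsβ, ← Complex.ofReal_mul, Real.mul_self_sqrt hbre]
  -- determinants of the two congruence pieces
  have hdetP : ((jury Wx B').submatrix Fin.succ Fin.succ).det
      = ((a:ℝ):ℂ)^(n+1) * ((B'.submatrix Fin.succ Fin.succ).det) := by
    rw [hWx, jury_rankOne_left_submatrix x B' hB'row hB'col]
    rw [det_mul, det_mul, det_conjTranspose, det_Lmat, star_pow, hx0, hsα]
    rw [show ((α:ℂ))^(n+1) * (B'.submatrix Fin.succ Fin.succ).det * ((α:ℂ))^(n+1)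
      = (((α:ℂ))^2)^(n+1) * (B'.submatrix Fin.succ Fin.succ).det from by ring, hα2]
  have hdetQ : ((jury A' Wy).submatrix Fin.succ Fin.succ).det
      = ((b:ℝ):ℂ)^(n+1) * ((A'.submatrix Fin.succ Fin.succ).det) := by
    rw [hWy, jury_rankOne_right_submatrix y A' hA'row hA'col]
    rw [det_mul, det_mul, det_conjTranspose, det_Lmat, star_pow, hy0, hsβ]
    rw [show ((β:ℂ))^(n+1) * (A'.submatrix Fin.succ Fin.succ).det * ((β:ℂ))^(n+1)
      = (((β:ℂ))^2)^(n+1) * (A'.submatrix Fin.succ Fin.succ).det from by ring, hβ2]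
  -- positive semidefiniteness of the pieces
  have hWxpsd : Wx.PosSemidef := by rw [hWx]; exact rankOne_posSemidef x
  have hWypsd : Wy.PosSemidef := by rw [hWy]; exact rankOne_posSemidef y
  have hPpsd : ((jury Wx B').submatrix Fin.succ Fin.succ).PosSemidef :=
    (jury_posSemidef hWxpsd hB'psd).submatrix Fin.succ
  have hQpsd : ((jury A' Wy).submatrix Fin.succ Fin.succ).PosSemidef :=
    (jury_posSemidef hA'psd hWypsd).submatrix Fin.succ
  have hRpsd : ((jury A' B').submatrix Fin.succ Fin.succ).PosSemidef :=
    (jury_posSemidef hA'psd hB'psd).submatrix Fin.succ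
  -- superadditivity step
  have hkey : ((jury Wx B').submatrix Fin.succ Fin.succ).det
      + ((jury A' Wy).submatrix Fin.succ Fin.succ).det
      ≤ ((jury Wx B' + (jury A' Wy + jury A' B')).submatrix Fin.succ Fin.succ).det := by
    have hsplit : (jury Wx B' + (jury A' Wy + jury A' B')).submatrix Fin.succ Fin.succ
        = (jury Wx B').submatrix Fin.succ Fin.succ
          + ((jury A' Wy).submatrix Fin.succ Fin.succ
            + (jury A' B').submatrix Fin.succ Fin.succ) := by
      ext j k; simp [submatrix_apply, Matrix.add_apply]
    rw [hsplit]
    have h1 : ((jury A' Wy).submatrix Fin.succ Fin.succ).det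
        ≤ ((jury A' Wy).submatrix Fin.succ Fin.succ
          + (jury A' B').submatrix Fin.succ Fin.succ).det :=
      le_trans (le_add_of_nonneg_right (psd_det_nonneg hRpsd))
        (det_add_det_le (by omega) hQpsd hRpsd)
    calc ((jury Wx B').submatrix Fin.succ Fin.succ).det
          + ((jury A' Wy).submatrix Fin.succ Fin.succ).det
        ≤ ((jury Wx B').submatrix Fin.succ Fin.succ).det
          + ((jury A' Wy).submatrix Fin.succ Fin.succ
            + (jury A' B').submatrix Fin.succ Fin.succ).det := add_le_add (le_refl _) h1
      _ ≤ _ := det_add_det_le (by omega) hPpsd (hQpsd.add hRpsd)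
  -- final assembly
  have hab : (0:ℂ) ≤ (((a*b : ℝ)):ℂ) := by
    rw [Complex.zero_le_real]
    positivity
  have hmul := mul_le_mul_of_nonneg_left hkey hab
  rw [hdetP, hdetQ] at hmul
  rw [haRe, hbRe, hdetA, hdetB, hdetJ]
  refine le_trans (le_of_eq ?_) hmul
  push_cast
  ring
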